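/- arXiv:1411.5293 — 6 statements merged into one kernel-verified Lean document; each statement's English description precedes it below -/
import Mathlib

section
/- In U(osp(1,2)), with z = b⁺b⁻ - b⁻b⁺ + 1, e = (1/2)(b⁺)², f = -(1/2)(b⁻)², and ω = 4ef + k² - 2k, one has z² = 4ω - 2z + 3, equivalently (z+1)² = 4(ω+1). -/
/-- In `U(osp(1,2))`, with `z = b⁺b⁻ - b⁻b⁺ + 1`, `e = (1/2)(b⁺)²`,
`f = -(1/2)(b⁻)²` and `ω = 4ef + k² - 2k`, one has `z² = 4ω - 2z + 3`,
equivalently `(z+1)² = 4(ω+1)`. -/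
theorem stmt_6 (R : Type*) [Ring R] [Algebra ℂ R] (bp bm k : R)
    (h1 : k * bp - bp * k = bp)
    (h2 : k * bm - bm * k = -bm)
    (h3 : bm * bp = -(bp * bm) + 2 * k)
    (z e f ω : R)
    (hz : z = bp * bm - bm * bp + 1)
    (he : e = (1 / 2 : ℂ) • (bp * bp))
    (hf : f = -((1 / 2 : ℂ) • (bm * bm)))
    (hω : ω = 4 * (e * f) + k ^ 2 - 2 * k) :
    z ^ 2 = 4 * ω - 2 * z + 3 ∧ (z + 1) ^ 2 = 4 * (ω + 1) := by
  -- key scalar computation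
  have hef : 4 * (e * f) = -(bp * bp * (bm * bm)) := by
    rw [he, hf]
    rw [mul_neg, smul_mul_smul]
    rw [mul_neg, neg_inj]
    rw [Algebra.smul_def]
    rw [show ((1/2 : ℂ) * (1/2)) = (4 : ℂ)⁻¹ by norm_num]
    rw [show (4 : R) = algebraMap ℂ R 4 from (map_ofNat (algebraMap ℂ R) 4).symm]
    rw [← mul_assoc, ← map_mul]
    norm_num
  have hbpk : k * bp = bp + bp * k := sub_eq_iff_eq_add.mp h1
  have hkbm : k * bm = -bm + bm * k := sub_eq_iff_eq_add.mp h2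
  have hz' : z = 2 * (bp * bm) - 2 * k + 1 := by
    rw [hz, h3]
    noncomm_ring [show (2:R) = 1+1 from by norm_num]
  -- k commutes with bp*bm
  have hkX : k * (bp * bm) = bp * bm * k := by
    calc k * (bp * bm) = (k * bp) * bm := by rw [mul_assoc]
    _ = (bp + bp * k) * bm := by rw [hbpk]
    _ = bp * bm + bp * (k * bm) := by noncomm_ring
    _ = bp * bm + bp * (-bm + bm * k) := by rw [hkbm]
    _ = bp * bm * k := by noncomm_ring
  -- square of bp*bm
  have hXX : bp * bm * (bp * bm) = -(bp * bp * (bm * bm)) + 2 * (bp * bm * k) - 2 * (bp * bm) := by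
    calc bp * bm * (bp * bm) = bp * (bm * bp) * bm := by noncomm_ring
    _ = bp * (-(bp * bm) + 2 * k) * bm := by rw [h3]
    _ = -(bp * bp * (bm * bm)) + 2 * (bp * (k * bm)) := by
        noncomm_ring [show (2:R) = 1+1 from by norm_num]
    _ = -(bp * bp * (bm * bm)) + 2 * (bp * (-bm + bm * k)) := by rw [hkbm]
    _ = -(bp * bp * (bm * bm)) + 2 * (bp * bm * k) - 2 * (bp * bm) := by
        noncomm_ring [show (2:R) = 1+1 from by norm_num]
  have main : z ^ 2 = 4 * ω - 2 * z + 3 := by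
    rw [hω, hef, hz']
    calc (2 * (bp * bm) - 2 * k + 1) ^ 2
        = 4 * (bp * bm * (bp * bm)) - 4 * (bp * bm * k) - 4 * (k * (bp * bm))
          + 4 * (bp * bm) + 4 * (k * k) - 4 * k + 1 := by
          noncomm_ring [show (2:R) = 1+1 from by norm_num,
            show (4:R) = 1+1+1+1 from by norm_num]
    _ = 4 * (-(bp * bp * (bm * bm)) + 2 * (bp * bm * k) - 2 * (bp * bm))
          - 4 * (bp * bm * k) - 4 * (bp * bm * k)
          + 4 * (bp * bm) + 4 * (k * k) - 4 * k + 1 := by rw [hXX, hkX]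
    _ = 4 * (-(bp * bp * (bm * bm)) + k ^ 2 - 2 * k)
          - 2 * (2 * (bp * bm) - 2 * k + 1) + 3 := by
          noncomm_ring [show (2:R) = 1+1 from by norm_num,
            show (3:R) = 1+1+1 from by norm_num,
            show (4:R) = 1+1+1+1 from by norm_num]
  refine ⟨main, ?_⟩
  have hsq : (z + 1) ^ 2 = z ^ 2 + 2 * z + 1 := by
    noncomm_ring [show (2:R) = 1+1 from by norm_num]
  rw [hsq, main]
  noncomm_ring [show (2:R) = 1+1 from by norm_num,
    show (3:R) = 1+1+1 from by norm_num,
    show (4:R) = 1+1+1+1 from by norm_num]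
end

section
/- In U(osp(1,2)), the super Casimir θ := ω - (1/2)(b⁺b⁻ - b⁻b⁺) and the Casimir ω = 4ef + k² - 2k satisfy the algebraic relation ω² - (2θ - 1)ω + θ(θ - 2) = 0. -/
/-- In `U(osp(1,2))`, the super Casimir `θ = ω - (1/2)(b⁺b⁻ - b⁻b⁺)` and the
Casimir `ω = 4ef + k² - 2k` satisfy `ω² - (2θ - 1)ω + θ(θ - 2) = 0`. -/
theorem stmt_7 (R : Type*) [Ring R] [Algebra ℂ R] (bp bm k : R)
    (h1 : k * bp - bp * k = bp)
    (h2 : k * bm - bm * k = -bm)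
    (h3 : bm * bp = -(bp * bm) + 2 * k)
    (e f ω θ : R)
    (he : e = (1 / 2 : ℂ) • (bp * bp))
    (hf : f = -((1 / 2 : ℂ) • (bm * bm)))
    (hω : ω = 4 * (e * f) + k ^ 2 - 2 * k)
    (hθ : θ = ω - (1 / 2 : ℂ) • (bp * bm - bm * bp)) :
    ω ^ 2 - (2 * θ - 1) * ω + θ * (θ - 2) = 0 := by
  have hkp : k * bp = bp * k + bp := by
    rw [add_comm]; exact sub_eq_iff_eq_add.mp h1
  have hmk : bm * k = k * bm + bm := by
    have h2' : bm * k - k * bm = bm := by rw [← neg_sub, h2, neg_neg]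
    rw [add_comm]; exact sub_eq_iff_eq_add.mp h2'
  -- 4*(e*f) = -(bp*bp*(bm*bm))
  have hef : 4 * (e * f) = -(bp * bp * (bm * bm)) := by
    rw [he, hf, mul_neg, smul_mul_assoc, mul_smul_comm, smul_smul, mul_neg,
      mul_smul_comm, neg_inj,
      show (4 : R) * (bp * bp * (bm * bm)) = (4 : ℂ) • (bp * bp * (bm * bm)) from by
        rw [Algebra.smul_def, map_ofNat],
      smul_smul]
    norm_num
  -- θ = ω - (bp*bm - k)
  have hhalf : (1 / 2 : ℂ) • (bp * bm - bm * bp) = bp * bm - k := by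
    rw [h3, show bp * bm - (-(bp * bm) + 2 * k) = (bp * bm - k) + (bp * bm - k) by
      noncomm_ring, smul_add, ← add_smul]
    norm_num
  have hθ' : θ = ω - (bp * bm - k) := by rw [hθ, hhalf]
  -- key rewrites
  have A : bp * bm * (bp * bm) = -(bp * bp * (bm * bm)) + 2 * (bp * (k * bm)) := by
    calc bp * bm * (bp * bm) = bp * (bm * bp) * bm := by noncomm_ring
      _ = bp * (-(bp * bm) + 2 * k) * bm := by rw [h3]
      _ = -(bp * bp * (bm * bm)) + 2 * (bp * (k * bm)) := by noncomm_ring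
  have B : bp * bm * k = bp * (k * bm) + bp * bm := by
    calc bp * bm * k = bp * (bm * k) := by noncomm_ring
      _ = bp * (k * bm + bm) := by rw [hmk]
      _ = bp * (k * bm) + bp * bm := by noncomm_ring
  have C : k * (bp * bm) = bp * (k * bm) + bp * bm := by
    calc k * (bp * bm) = (k * bp) * bm := by noncomm_ring
      _ = (bp * k + bp) * bm := by rw [hkp]
      _ = bp * (k * bm) + bp * bm := by noncomm_ring
  -- ω = t^2 + 2t with t = bp*bm - k
  have key : ω = (bp * bm - k) * (bp * bm - k) + 2 * (bp * bm - k) := by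
    rw [hω, hef]
    rw [show (bp * bm - k) * (bp * bm - k) + 2 * (bp * bm - k)
        = bp * bm * (bp * bm) - bp * bm * k - k * (bp * bm) + k * k
          + 2 * (bp * bm) - 2 * k by noncomm_ring, A, B, C]
    noncomm_ring
  rw [hθ', key]
  noncomm_ring
end

section
/- In U(n⁺) as above, the element y := b₁⁺b₂⁺ - a⁺ commutes with a⁺ and with t. -/
/-- In `U(n⁺)`, the element `y := b₁⁺b₂⁺ - a⁺` commutes with `a⁺` and with `t`. -/
theorem stmt_10 (R : Type*) [Ring R] [Algebra ℂ R] (b1 b2 a t : R)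
    (h1 : b1 * a = a * b1)
    (h2 : b2 * a = a * b2)
    (h3 : b2 * b1 = -(b1 * b2) + 2 * a)
    (h4 : t * b1 = b1 * t)
    (h5 : t * a = a * t + b1 * b1)
    (h6 : t * b2 = b2 * t + b1) :
    (b1 * b2 - a) * a = a * (b1 * b2 - a) ∧
    (b1 * b2 - a) * t = t * (b1 * b2 - a) := by
  constructor
  · calc (b1 * b2 - a) * a = b1 * (b2 * a) - a * a := by noncomm_ring
    _ = a * (b1 * b2 - a) := by rw [h2, ← mul_assoc, h1]; noncomm_ring
  · have : t * (b1 * b2) = b1 * b2 * t + b1 * b1 := by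
      rw [← mul_assoc, h4, mul_assoc, h6]; noncomm_ring
    calc (b1 * b2 - a) * t = t * (b1 * b2) - b1 * b1 - (t * a - b1 * b1) := by
          rw [this, h5]; noncomm_ring
    _ = t * (b1 * b2 - a) := by noncomm_ring
end

section
/- In any localization of U(n⁺) where b₁⁺ is invertible, the element t' := (b₁⁺)⁻² t satisfies t'a⁺ - a⁺t' = 1, t'b₁⁺ = b₁⁺t', and t'y = yt' where y = b₁⁺b₂⁺ - a⁺. -/
/-- In any localization of `U(n⁺)` in which `b₁⁺` is invertible, the element
`t' := (b₁⁺)⁻² t` satisfies `t'a⁺ - a⁺t' = 1`, `t'b₁⁺ = b₁⁺t'` and `t'y = yt'`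
where `y = b₁⁺b₂⁺ - a⁺`. -/
theorem stmt_12 (R : Type*) [Ring R] [Algebra ℂ R] (b1 b2 a t b1inv : R)
    (h1 : b1 * a = a * b1)
    (h2 : b2 * a = a * b2)
    (h3 : b2 * b1 = -(b1 * b2) + 2 * a)
    (h4 : t * b1 = b1 * t)
    (h5 : t * a = a * t + b1 * b1)
    (h6 : t * b2 = b2 * t + b1)
    (hinv1 : b1 * b1inv = 1) (hinv2 : b1inv * b1 = 1) :
    (b1inv * b1inv * t) * a - a * (b1inv * b1inv * t) = 1 ∧
    (b1inv * b1inv * t) * b1 = b1 * (b1inv * b1inv * t) ∧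
    (b1inv * b1inv * t) * (b1 * b2 - a) = (b1 * b2 - a) * (b1inv * b1inv * t) := by
  have ha : b1inv * a = a * b1inv := by
    calc b1inv * a = b1inv * a * (b1 * b1inv) := by rw [hinv1, mul_one]
      _ = b1inv * (a * b1) * b1inv := by noncomm_ring
      _ = b1inv * (b1 * a) * b1inv := by rw [h1]
      _ = (b1inv * b1) * (a * b1inv) := by noncomm_ring
      _ = a * b1inv := by rw [hinv2, one_mul]
  have ht : b1inv * t = t * b1inv := by
    calc b1inv * t = b1inv * t * (b1 * b1inv) := by rw [hinv1, mul_one]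
      _ = b1inv * (t * b1) * b1inv := by noncomm_ring
      _ = b1inv * (b1 * t) * b1inv := by rw [h4]
      _ = (b1inv * b1) * (t * b1inv) := by noncomm_ring
      _ = t * b1inv := by rw [hinv2, one_mul]
  have key1 : a * (b1inv * b1inv * t) = b1inv * b1inv * (a * t) := by
    calc a * (b1inv * b1inv * t) = (a * b1inv) * b1inv * t := by noncomm_ring
      _ = (b1inv * a) * b1inv * t := by rw [ha]
      _ = b1inv * (a * b1inv) * t := by noncomm_ring
      _ = b1inv * (b1inv * a) * t := by rw [ha]
      _ = b1inv * b1inv * (a * t) := by noncomm_ring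
  have c1 : (b1inv * b1inv * t) * a - a * (b1inv * b1inv * t) = 1 := by
    calc (b1inv * b1inv * t) * a - a * (b1inv * b1inv * t)
        = b1inv * b1inv * (t * a) - b1inv * b1inv * (a * t) := by rw [key1]; noncomm_ring
      _ = b1inv * b1inv * (a * t + b1 * b1) - b1inv * b1inv * (a * t) := by rw [h5]
      _ = b1inv * (b1inv * b1) * b1 := by noncomm_ring
      _ = 1 := by rw [hinv2, mul_one, hinv2]
  have c2 : (b1inv * b1inv * t) * b1 = b1 * (b1inv * b1inv * t) := by
    calc (b1inv * b1inv * t) * b1 = b1inv * b1inv * (t * b1) := by noncomm_ring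
      _ = b1inv * b1inv * (b1 * t) := by rw [h4]
      _ = b1inv * (b1inv * b1) * t := by noncomm_ring
      _ = b1inv * t := by rw [hinv2, mul_one]
      _ = (b1 * b1inv) * (b1inv * t) := by rw [hinv1, one_mul]
      _ = b1 * (b1inv * b1inv * t) := by noncomm_ring
  have tb1 : (b1inv * b1inv * t) * b1 = b1inv * t := by
    calc (b1inv * b1inv * t) * b1 = b1inv * b1inv * (t * b1) := by noncomm_ring
      _ = b1inv * b1inv * (b1 * t) := by rw [h4]
      _ = b1inv * (b1inv * b1) * t := by noncomm_ring
      _ = b1inv * t := by rw [hinv2, mul_one]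
  have e1 : b1 * b2 * b1inv = -b2 + 2 * (a * b1inv) := by
    have hb : b1 * b2 = -(b2 * b1) + 2 * a := by rw [h3]; noncomm_ring
    calc b1 * b2 * b1inv = (-(b2 * b1) + 2 * a) * b1inv := by rw [hb]
      _ = -(b2 * (b1 * b1inv)) + 2 * (a * b1inv) := by noncomm_ring
      _ = -b2 + 2 * (a * b1inv) := by rw [hinv1, mul_one]
  have e2 : b1inv * b2 = -(b2 * b1inv) + 2 * (a * (b1inv * b1inv)) := by
    calc b1inv * b2 = b1inv * b2 * (b1 * b1inv) := by rw [hinv1, mul_one]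
      _ = b1inv * (b2 * b1) * b1inv := by noncomm_ring
      _ = b1inv * (-(b1 * b2) + 2 * a) * b1inv := by rw [h3]
      _ = -((b1inv * b1) * (b2 * b1inv)) + 2 * ((b1inv * a) * b1inv) := by noncomm_ring
      _ = -(b2 * b1inv) + 2 * ((a * b1inv) * b1inv) := by rw [hinv2, one_mul, ha]
      _ = -(b2 * b1inv) + 2 * (a * (b1inv * b1inv)) := by noncomm_ring
  have e3 : b1 * b2 * (b1inv * b1inv) = b1inv * b2 := by
    calc b1 * b2 * (b1inv * b1inv) = (b1 * b2 * b1inv) * b1inv := by noncomm_ring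
      _ = (-b2 + 2 * (a * b1inv)) * b1inv := by rw [e1]
      _ = -(b2 * b1inv) + 2 * (a * (b1inv * b1inv)) := by noncomm_ring
      _ = b1inv * b2 := by rw [e2]
  have c3 : (b1inv * b1inv * t) * (b1 * b2 - a) = (b1 * b2 - a) * (b1inv * b1inv * t) := by
    have lhs : (b1inv * b1inv * t) * (b1 * b2 - a) = b1inv * (b2 * t) - a * (b1inv * b1inv * t) := by
      calc (b1inv * b1inv * t) * (b1 * b2 - a)
          = ((b1inv * b1inv * t) * b1) * b2 - b1inv * b1inv * (t * a) := by noncomm_ring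
        _ = (b1inv * t) * b2 - b1inv * b1inv * (a * t + b1 * b1) := by rw [tb1, h5]
        _ = b1inv * (t * b2) - (b1inv * b1inv * (a * t) + b1inv * (b1inv * b1) * b1) := by
              noncomm_ring
        _ = b1inv * (b2 * t + b1) - (a * (b1inv * b1inv * t) + 1) := by
              rw [h6, ← key1, hinv2, mul_one, hinv2]
        _ = b1inv * (b2 * t) + (b1inv * b1 - 1) - a * (b1inv * b1inv * t) := by
              noncomm_ring
        _ = b1inv * (b2 * t) - a * (b1inv * b1inv * t) := by rw [hinv2]; noncomm_ring
    have rhs : (b1 * b2 - a) * (b1inv * b1inv * t) = b1inv * (b2 * t) - a * (b1inv * b1inv * t) := by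
      calc (b1 * b2 - a) * (b1inv * b1inv * t)
          = (b1 * b2 * (b1inv * b1inv)) * t - a * (b1inv * b1inv * t) := by noncomm_ring
        _ = (b1inv * b2) * t - a * (b1inv * b1inv * t) := by rw [e3]
        _ = b1inv * (b2 * t) - a * (b1inv * b1inv * t) := by noncomm_ring
    rw [lhs, rhs]
  exact ⟨c1, c2, c3⟩
end

section
/- The universal enveloping algebra of the Lie superalgebra osp(1,2) is isomorphic as a ℂ-algebra to the iterated Ore extension ℂ[b⁺][k; δ][b⁻; τ, d], where δ = b⁺∂_{b⁺} on ℂ[b⁺], τ is the automorphism of ℂ[b⁺][k; δ] with τ(b⁺) = -b⁺, τ(k) = k+1, and d is the τ-derivation with d(b⁺) = 2k, d(k) = 0. -/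
/-- The defining relations of `U(osp(1,2))` on the free algebra on three
generators `b⁺ = X 0`, `k = X 1`, `b⁻ = X 2`:
`kb⁺ - b⁺k = b⁺`, `kb⁻ - b⁻k = -b⁻`, `b⁻b⁺ + b⁺b⁻ = 2k`. -/
inductive OspRel : FreeAlgebra ℂ (Fin 3) → FreeAlgebra ℂ (Fin 3) → Prop
  | rel1 : OspRel (FreeAlgebra.ι ℂ 1 * FreeAlgebra.ι ℂ 0 - FreeAlgebra.ι ℂ 0 * FreeAlgebra.ι ℂ 1)
      (FreeAlgebra.ι ℂ 0)
  | rel2 : OspRel (FreeAlgebra.ι ℂ 1 * FreeAlgebra.ι ℂ 2 - FreeAlgebra.ι ℂ 2 * FreeAlgebra.ι ℂ 1)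
      (-FreeAlgebra.ι ℂ 2)
  | rel3 : OspRel (FreeAlgebra.ι ℂ 2 * FreeAlgebra.ι ℂ 0 + FreeAlgebra.ι ℂ 0 * FreeAlgebra.ι ℂ 2)
      (2 * FreeAlgebra.ι ℂ 1)

/-- The enveloping algebra `U(osp(1,2))`. -/
def UOsp12 : Type := RingQuot OspRel

noncomputable instance : Ring UOsp12 := inferInstanceAs (Ring (RingQuot OspRel))
noncomputable instance : Algebra ℂ UOsp12 := inferInstanceAs (Algebra ℂ (RingQuot OspRel))


open MvPolynomial
noncomputable section
namespace Osp

abbrev P := MvPolynomial (Fin 3) ℂ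

/-- the "divided reflection" operator: `monomial d ↦ monomial (d - e₀)` if `d 0` odd, else 0. -/
def Δ : P →ₗ[ℂ] P :=
  (basisMonomials (Fin 3) ℂ).constr ℂ
    (fun d => if Odd (d 0) then monomial (d - Finsupp.single 0 1) 1 else 0)

lemma Δ_monomial (d : Fin 3 →₀ ℕ) (c : ℂ) :
    Δ (monomial d c) = if Odd (d 0) then monomial (d - Finsupp.single 0 1) c else 0 := by
  have h1 : monomial d c = c • monomial d 1 := by simp [smul_monomial]
  rw [h1, map_smul]
  have h2 : Δ (monomial d 1) = if Odd (d 0) then monomial (d - Finsupp.single 0 1) 1 else 0 := by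
    have := (basisMonomials (Fin 3) ℂ).constr_basis ℂ
      (fun d => if Odd (d 0) then monomial (d - Finsupp.single 0 1) (1:ℂ) else 0) d
    exact this
  rw [h2]
  split_ifs <;> simp [smul_monomial]

/-- the algebra map `x ↦ -x, t ↦ t+1, z ↦ z`. -/
def σA : P →ₐ[ℂ] P := aeval ![-X 0, X 1 + 1, X 2]

@[simp] lemma σA_X0 : σA (X 0) = -X 0 := by simp [σA]
@[simp] lemma σA_X1 : σA (X 1) = X 1 + 1 := by simp [σA]
@[simp] lemma σA_X2 : σA (X 2) = X 2 := by simp [σA]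

end Osp
namespace Osp

lemma X_mul_monomial' (n : Fin 3) (d : Fin 3 →₀ ℕ) (c : ℂ) :
    (X n : P) * monomial d c = monomial (d + Finsupp.single n 1) c := by
  rw [X, monomial_mul, one_mul, add_comm]

lemma apply0 (d : Fin 3 →₀ ℕ) (n : Fin 3) (k : ℕ) (h : n ≠ 0) :
    (d + Finsupp.single n k) 0 = d 0 := by
  simp [Finsupp.single_apply, h]

lemma ΔA (p : P) : Δ (X 0 * p) + X 0 * Δ p = p := by
  induction p using MvPolynomial.induction_on' with
  | add p q hp hq =>
    simp only [mul_add, map_add]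
    linear_combination hp + hq
  | monomial d c =>
    rw [X_mul_monomial', Δ_monomial, Δ_monomial]
    have h0 : (d + Finsupp.single (0 : Fin 3) (1 : ℕ)) 0 = d 0 + 1 := by
      rw [Finsupp.add_apply, Finsupp.single_eq_same]
    by_cases h : Odd (d 0)
    · rw [if_pos h, if_neg (by rw [h0]; simp [Nat.odd_add_one, h])]
      rw [X_mul_monomial', zero_add]
      congr 1
      have hle : Finsupp.single (0 : Fin 3) 1 ≤ d := by
        rw [Finsupp.single_le_iff]
        obtain ⟨m, hm⟩ := h
        omega
      rw [tsub_add_cancel_of_le hle]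
    · rw [if_neg h, if_pos (by rw [h0]; simp [Nat.odd_add_one, Nat.not_odd_iff_even.mp h]),
        mul_zero, add_zero, add_tsub_cancel_right]

lemma ΔC (p : P) : Δ (X 1 * p) = X 1 * Δ p := by
  induction p using MvPolynomial.induction_on' with
  | add p q hp hq => rw [mul_add, map_add, map_add, mul_add, hp, hq]
  | monomial d c =>
    rw [X_mul_monomial', Δ_monomial, Δ_monomial, apply0 d 1 1 (by decide)]
    by_cases h : Odd (d 0)
    · rw [if_pos h, if_pos h, X_mul_monomial']
      have he : d + Finsupp.single 1 1 - Finsupp.single 0 1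
          = d - Finsupp.single 0 1 + Finsupp.single 1 1 := by
        ext a
        simp only [Finsupp.tsub_apply, Finsupp.add_apply, Finsupp.single_apply]
        split_ifs <;> omega
      rw [he]
    · rw [if_neg h, if_neg h, mul_zero]

end Osp
namespace Osp

lemma sub0 (d : Fin 3 →₀ ℕ) : (d - Finsupp.single (0:Fin 3) (1:ℕ)) 0 = d 0 - 1 := by
  rw [Finsupp.tsub_apply, Finsupp.single_eq_same]

lemma subsubadd (d : Fin 3 →₀ ℕ) (h : 2 ≤ d 0) :
    d - Finsupp.single 0 1 - Finsupp.single 0 1 + Finsupp.single 0 1 = d - Finsupp.single 0 1 := by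
  ext a
  simp only [Finsupp.tsub_apply, Finsupp.add_apply, Finsupp.single_apply]
  split_ifs with hh
  · subst hh; omega
  · omega

lemma ΔD (p : P) : X 0 * (pderiv 0 (Δ p) + Δ (pderiv 0 p)) + Δ p = pderiv 0 p := by
  induction p using MvPolynomial.induction_on' with
  | add p q hp hq =>
    simp only [map_add, mul_add]
    linear_combination hp + hq
  | monomial d c =>
    rw [Δ_monomial, pderiv_monomial]
    by_cases h : Odd (d 0)
    · rw [if_pos h, pderiv_monomial, Δ_monomial, sub0,
        if_neg (by rw [Nat.odd_iff] at h ⊢; omega)]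
      obtain ⟨m, hm⟩ := h
      rcases Nat.eq_zero_or_pos m with hm0 | hm0
      · subst hm0
        rw [hm]
        norm_num
      · rw [add_zero, show (X 0 : P) * monomial (d - Finsupp.single 0 1 - Finsupp.single 0 1)
            (c * ((d 0 - 1 : ℕ) : ℂ)) = monomial (d - Finsupp.single 0 1 - Finsupp.single 0 1
            + Finsupp.single 0 1) (c * ((d 0 - 1 : ℕ) : ℂ)) from X_mul_monomial' _ _ _,
          subsubadd d (by omega), ← map_add]
        congr 1
        rw [hm]
        push_cast
        ring
    · rw [if_neg h, Δ_monomial, sub0]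
      rw [Nat.odd_iff] at h
      rcases Nat.eq_zero_or_pos (d 0) with h0 | h0
      · rw [if_neg (by rw [Nat.odd_iff]; omega)]
        simp [h0]
      · rw [if_pos (by rw [Nat.odd_iff]; omega), map_zero, zero_add, add_zero,
          show (X 0 : P) * monomial (d - Finsupp.single 0 1 - Finsupp.single 0 1)
            (c * ((d 0 : ℕ) : ℂ)) = monomial (d - Finsupp.single 0 1 - Finsupp.single 0 1
            + Finsupp.single 0 1) (c * ((d 0 : ℕ) : ℂ)) from X_mul_monomial' _ _ _,
          subsubadd d (by omega)]

end Osp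
namespace Osp

lemma pderiv_σA (p : P) : pderiv 0 (σA p) = -σA (pderiv 0 p) := by
  induction p using MvPolynomial.induction_on with
  | C a => simp [σA]
  | add p q hp hq => simp [map_add, hp, hq]; ring
  | mul_X p n hp =>
    rw [map_mul, pderiv_mul, pderiv_mul, hp, map_add, map_mul]
    fin_cases n
    all_goals first
      | (simp [pderiv_X, Pi.single_apply]; ring)
      | simp [pderiv_X, Pi.single_apply]

end Osp
namespace Osp

lemma ΔA' (p : P) : Δ (X 0 * p) = p - X 0 * Δ p := by linear_combination ΔA p

def bHat : Module.End ℂ P := LinearMap.mulLeft ℂ (X 0)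
def kHat : Module.End ℂ P :=
  LinearMap.mulLeft ℂ (X 1) + (LinearMap.mulLeft ℂ (X 0)) ∘ₗ (pderiv 0).toLinearMap
def cHat : Module.End ℂ P :=
  (LinearMap.mulLeft ℂ (X 2)) ∘ₗ σA.toLinearMap + (pderiv 0).toLinearMap
    + (LinearMap.mulLeft ℂ (2 * X 1 - 1)) ∘ₗ Δ

@[simp] lemma bHat_apply (p : P) : bHat p = X 0 * p := rfl
@[simp] lemma kHat_apply (p : P) : kHat p = X 1 * p + X 0 * pderiv 0 p := rfl
@[simp] lemma cHat_apply (p : P) :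
    cHat p = X 2 * σA p + pderiv 0 p + (2 * X 1 - 1) * Δ p := rfl

lemma rel1End : kHat * bHat - bHat * kHat = bHat := by
  refine LinearMap.ext fun p => ?_
  simp only [LinearMap.sub_apply, Module.End.mul_apply, bHat_apply, kHat_apply,
    pderiv_mul, pderiv_X, Pi.single_eq_same]
  ring

lemma rel3End : cHat * bHat + bHat * cHat = 2 * kHat := by
  have h2 : (2 : Module.End ℂ P) * kHat = kHat + kHat := two_mul kHat
  rw [h2]
  refine LinearMap.ext fun p => ?_
  rw [LinearMap.add_apply, Module.End.mul_apply, Module.End.mul_apply, LinearMap.add_apply]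
  simp only [bHat_apply, kHat_apply, cHat_apply, map_mul, σA_X0, pderiv_mul, pderiv_X,
    Pi.single_eq_same, ΔA']
  ring

lemma rel2End : kHat * cHat - cHat * kHat = -cHat := by
  refine LinearMap.ext fun p => ?_
  rw [LinearMap.sub_apply, Module.End.mul_apply, Module.End.mul_apply, LinearMap.neg_apply]
  have e1 : pderiv (R := ℂ) 0 (X 1 : P) = 0 := by
    simp [pderiv_X, Pi.single_apply]
  have e2 : pderiv (R := ℂ) 0 (X 2 : P) = 0 := by
    simp [pderiv_X, Pi.single_apply]
  have e0 : pderiv (R := ℂ) 0 (2 : P) = 0 := by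
    have : (2 : P) = C (2 : ℂ) := by
      rw [map_ofNat]
    rw [this, pderiv_C]
  have e4 : pderiv (R := ℂ) 0 (2 * X 1 - 1 : P) = 0 := by
    simp [pderiv_mul, e1, e0]
  simp only [kHat_apply, cHat_apply, map_add, map_mul, σA_X0, σA_X1, σA_X2,
    pderiv_mul, pderiv_X, Pi.single_eq_same, ΔA', ΔC, pderiv_σA, e1, e2, e4]
  linear_combination (2 * X 1 - 1) * ΔD p
end Osp
namespace Osp

def rep : FreeAlgebra ℂ (Fin 3) →ₐ[ℂ] Module.End ℂ P :=
  FreeAlgebra.lift ℂ ![bHat, kHat, cHat]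

@[simp] lemma rep_0 : rep (FreeAlgebra.ι ℂ 0) = bHat := by
  simp [rep, FreeAlgebra.lift_ι_apply]
@[simp] lemma rep_1 : rep (FreeAlgebra.ι ℂ 1) = kHat := by
  simp [rep, FreeAlgebra.lift_ι_apply]
@[simp] lemma rep_2 : rep (FreeAlgebra.ι ℂ 2) = cHat := by
  simp [rep, FreeAlgebra.lift_ι_apply]

lemma rep_rel : ∀ ⦃x y⦄, OspRel x y → rep x = rep y := by
  intro x y h
  induction h with
  | rel1 => rw [map_sub, map_mul, map_mul, rep_0, rep_1]; exact rel1End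
  | rel2 =>
    rw [map_sub, map_mul, map_mul, map_neg, rep_1, rep_2]; exact rel2End
  | rel3 =>
    rw [map_add, map_mul, map_mul, map_mul, rep_0, rep_1, rep_2, map_ofNat]
    exact rel3End
end Osp

namespace Osp

def φ : UOsp12 →ₐ[ℂ] Module.End ℂ P := RingQuot.liftAlgHom ℂ ⟨rep, rep_rel⟩

def Bq : UOsp12 := RingQuot.mkAlgHom ℂ OspRel (FreeAlgebra.ι ℂ 0)
def Kq : UOsp12 := RingQuot.mkAlgHom ℂ OspRel (FreeAlgebra.ι ℂ 1)
def Cq : UOsp12 := RingQuot.mkAlgHom ℂ OspRel (FreeAlgebra.ι ℂ 2)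

@[simp] lemma φ_B : φ Bq = bHat := by
  exact (RingQuot.liftAlgHom_mkAlgHom_apply ℂ rep rep_rel _).trans rep_0
@[simp] lemma φ_K : φ Kq = kHat := by
  exact (RingQuot.liftAlgHom_mkAlgHom_apply ℂ rep rep_rel _).trans rep_1
@[simp] lemma φ_C : φ Cq = cHat := by
  exact (RingQuot.liftAlgHom_mkAlgHom_apply ℂ rep rep_rel _).trans rep_2

lemma pd_X1 : pderiv (R := ℂ) 0 (X 1 : P) = 0 := by
  simp [pderiv_X, Pi.single_apply]
lemma pd_X2 : pderiv (R := ℂ) 0 (X 2 : P) = 0 := by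
  simp [pderiv_X, Pi.single_apply]

lemma cHat_pow (l : ℕ) : (cHat ^ l) (1 : P) = X 2 ^ l := by
  induction l with
  | zero => simp
  | succ l ih =>
    rw [pow_succ', Module.End.mul_apply, ih, cHat_apply]
    have h1 : σA ((X 2 : P) ^ l) = X 2 ^ l := by rw [map_pow, σA_X2]
    have h2 : pderiv (R := ℂ) 0 ((X 2 : P) ^ l) = 0 := by
      rw [Derivation.leibniz_pow, pd_X2]; simp
    have h3 : Δ ((X 2 : P) ^ l) = 0 := by
      rw [X_pow_eq_monomial, Δ_monomial,
        if_neg (by rw [Finsupp.single_eq_of_ne (by decide)]; decide)]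
    rw [h1, h2, h3, pow_succ']
    ring

lemma kHat_pow (j l : ℕ) : (kHat ^ j) ((X 2 : P) ^ l) = X 1 ^ j * X 2 ^ l := by
  induction j with
  | zero => simp
  | succ j ih =>
    rw [pow_succ', Module.End.mul_apply, ih, kHat_apply]
    have h2 : pderiv (R := ℂ) 0 ((X 1 : P) ^ j * X 2 ^ l) = 0 := by
      rw [pderiv_mul, Derivation.leibniz_pow, Derivation.leibniz_pow, pd_X1, pd_X2]; simp
    rw [h2, pow_succ']
    ring

lemma bHat_pow (i : ℕ) (q : P) : (bHat ^ i) q = X 0 ^ i * q := by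
  induction i with
  | zero => simp
  | succ i ih =>
    rw [pow_succ', Module.End.mul_apply, ih, bHat_apply, pow_succ']
    ring

def mfam : ℕ × ℕ × ℕ → UOsp12 := fun t => Bq ^ t.1 * Kq ^ t.2.1 * Cq ^ t.2.2

def ev : UOsp12 →ₗ[ℂ] P := (LinearMap.applyₗ (1 : P)).comp φ.toLinearMap

lemma ev_mfam (i j l : ℕ) :
    ev (mfam (i, j, l)) =
      monomial (Finsupp.single 0 i + Finsupp.single 1 j + Finsupp.single 2 l) 1 := by
  have : ev (mfam (i, j, l)) = (bHat ^ i * (kHat ^ j * cHat ^ l)) 1 := by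
    rw [ev, mfam]
    simp only [LinearMap.comp_apply, AlgHom.toLinearMap_apply, map_mul, map_pow, φ_B, φ_K, φ_C,
      mul_assoc]
    rfl
  rw [this, Module.End.mul_apply, Module.End.mul_apply, cHat_pow, kHat_pow, bHat_pow,
    X_pow_eq_monomial, X_pow_eq_monomial, X_pow_eq_monomial, monomial_mul, monomial_mul]
  simp [add_assoc]

lemma mfam_li : LinearIndependent ℂ mfam := by
  apply LinearIndependent.of_comp ev
  have hg : Function.Injective (fun t : ℕ × ℕ × ℕ =>
      Finsupp.single (0 : Fin 3) t.1 + Finsupp.single 1 t.2.1 + Finsupp.single 2 t.2.2) := by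
    rintro ⟨a1, a2, a3⟩ ⟨b1, b2, b3⟩ h
    have h0 := DFunLike.congr_fun h (0 : Fin 3)
    have h1 := DFunLike.congr_fun h (1 : Fin 3)
    have h2 := DFunLike.congr_fun h (2 : Fin 3)
    simp only [Finsupp.add_apply, Finsupp.single_apply_left] at h0 h1 h2
    simp at h0 h1 h2
    simp [h0, h1, h2]
  have := ((basisMonomials (Fin 3) ℂ).linearIndependent.comp _ hg)
  convert this using 1
  funext t
  obtain ⟨i, j, l⟩ := t
  simp only [Function.comp_apply, ev_mfam, coe_basisMonomials]
  all_goals rfl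

end Osp

namespace Osp

lemma relKB : Kq * Bq = Bq * Kq + Bq := by
  have h := RingQuot.mkAlgHom_rel ℂ OspRel.rel1
  simp only [map_sub, map_mul] at h
  have h' : Kq * Bq - Bq * Kq = Bq := h
  linear_combination (norm := noncomm_ring) h'

lemma relCK : Cq * Kq = (Kq + 1) * Cq := by
  have h := RingQuot.mkAlgHom_rel ℂ OspRel.rel2
  simp only [map_sub, map_mul, map_neg] at h
  have h' : Kq * Cq - Cq * Kq = -Cq := h
  linear_combination (norm := noncomm_ring) -h'

lemma relCB : Cq * Bq = -Bq * Cq + 2 * Kq := by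
  have h := RingQuot.mkAlgHom_rel ℂ OspRel.rel3
  simp only [map_add, map_mul, map_ofNat] at h
  have h' : Cq * Bq + Bq * Cq = (2 : UOsp12) * Kq := h
  linear_combination (norm := noncomm_ring) h'

lemma relKBi (i : ℕ) : Kq * Bq ^ i = Bq ^ i * Kq + (i : ℕ) • Bq ^ i := by
  induction i with
  | zero => simp
  | succ i ih =>
    rw [pow_succ, ← mul_assoc, ih, add_smul, one_smul]
    rw [add_mul, mul_assoc, relKB]
    noncomm_ring

lemma relCKj (j : ℕ) : Cq * Kq ^ j = (Kq + 1) ^ j * Cq := by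
  induction j with
  | zero => simp
  | succ j ih =>
    rw [pow_succ, ← mul_assoc, ih, mul_assoc, relCK, pow_succ, mul_assoc]

def S : Submodule ℂ UOsp12 := Submodule.span ℂ (Set.range mfam)

lemma mfam_mem (i j l : ℕ) : mfam (i, j, l) ∈ S :=
  Submodule.subset_span ⟨(i, j, l), rfl⟩

lemma B_mul_mfam (i j l : ℕ) : Bq * mfam (i, j, l) = mfam (i + 1, j, l) := by
  simp only [mfam]
  rw [← mul_assoc, ← mul_assoc, ← pow_succ']

lemma K_mul_mfam (i j l : ℕ) :
    Kq * mfam (i, j, l) = mfam (i, j + 1, l) + (i : ℕ) • mfam (i, j, l) := by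
  simp only [mfam]
  rw [← mul_assoc, ← mul_assoc, relKBi, add_mul, add_mul, smul_mul_assoc, smul_mul_assoc,
    mul_assoc (Bq ^ i) Kq (Kq ^ j), ← pow_succ']

lemma B_mul_mem {x : UOsp12} (hx : x ∈ S) : Bq * x ∈ S := by
  induction hx using Submodule.span_induction with
  | mem x hx =>
    obtain ⟨⟨i, j, l⟩, rfl⟩ := hx
    rw [B_mul_mfam]
    exact mfam_mem _ _ _
  | zero => rw [mul_zero]; exact zero_mem _
  | add x y _ _ hx hy => rw [mul_add]; exact add_mem hx hy
  | smul c x _ hx => rw [mul_smul_comm]; exact Submodule.smul_mem _ _ hx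

lemma K_mul_mem {x : UOsp12} (hx : x ∈ S) : Kq * x ∈ S := by
  induction hx using Submodule.span_induction with
  | mem x hx =>
    obtain ⟨⟨i, j, l⟩, rfl⟩ := hx
    rw [K_mul_mfam]
    exact add_mem (mfam_mem _ _ _) (Submodule.smul_mem _ _ (mfam_mem _ _ _))
  | zero => rw [mul_zero]; exact zero_mem _
  | add x y _ _ hx hy => rw [mul_add]; exact add_mem hx hy
  | smul c x _ hx => rw [mul_smul_comm]; exact Submodule.smul_mem _ _ hx

lemma KC_mem (j l : ℕ) : (Kq + 1) ^ j * Cq ^ l ∈ S := by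
  induction j with
  | zero =>
    rw [pow_zero, one_mul]
    have : Cq ^ l = mfam (0, 0, l) := by simp [mfam]
    rw [this]; exact mfam_mem _ _ _
  | succ j ih =>
    have hc : (Kq + 1) ^ j * Kq = Kq * (Kq + 1) ^ j :=
      (((Commute.refl Kq).add_right (Commute.one_right Kq)).pow_right j).eq.symm
    have : (Kq + 1) ^ (j + 1) * Cq ^ l
        = Kq * ((Kq + 1) ^ j * Cq ^ l) + (Kq + 1) ^ j * Cq ^ l := by
      rw [pow_succ, mul_assoc, add_mul, one_mul, mul_add, ← mul_assoc, hc, mul_assoc]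
    rw [this]
    exact add_mem (K_mul_mem ih) ih

lemma C_mul_mfam_mem (i : ℕ) : ∀ j l : ℕ, Cq * mfam (i, j, l) ∈ S := by
  induction i with
  | zero =>
    intro j l
    have : Cq * mfam (0, j, l) = (Kq + 1) ^ j * Cq ^ (l + 1) := by
      simp only [mfam, pow_zero, one_mul]
      rw [← mul_assoc, relCKj, mul_assoc, ← pow_succ']
    rw [this]
    exact KC_mem _ _
  | succ i ih =>
    intro j l
    have : Cq * mfam (i + 1, j, l)
        = -(Bq * (Cq * mfam (i, j, l))) + (Kq * mfam (i, j, l) + Kq * mfam (i, j, l)) := by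
      simp only [mfam]
      rw [pow_succ', mul_assoc Bq (Bq ^ i) (Kq ^ j), mul_assoc Bq (Bq ^ i * Kq ^ j) (Cq ^ l),
        ← mul_assoc Cq Bq _, relCB]
      noncomm_ring
    rw [this]
    exact add_mem (neg_mem (B_mul_mem (ih j l)))
      (add_mem (K_mul_mem (mfam_mem i j l)) (K_mul_mem (mfam_mem i j l)))

lemma C_mul_mem {x : UOsp12} (hx : x ∈ S) : Cq * x ∈ S := by
  induction hx using Submodule.span_induction with
  | mem x hx =>
    obtain ⟨⟨i, j, l⟩, rfl⟩ := hx
    exact C_mul_mfam_mem i j l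
  | zero => rw [mul_zero]; exact zero_mem _
  | add x y _ _ hx hy => rw [mul_add]; exact add_mem hx hy
  | smul c x _ hx => rw [mul_smul_comm]; exact Submodule.smul_mem _ _ hx

lemma mul_mem_S (a : UOsp12) : ∀ x ∈ S, a * x ∈ S := by
  obtain ⟨y, rfl⟩ := RingQuot.mkAlgHom_surjective ℂ OspRel a
  induction y using FreeAlgebra.induction with
  | grade0 r =>
    intro x hx
    rw [AlgHom.commutes]
    show (algebraMap ℂ UOsp12) r * x ∈ S
    rw [← Algebra.smul_def]
    exact Submodule.smul_mem _ _ hx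
  | grade1 n =>
    fin_cases n
    · exact fun x hx => B_mul_mem hx
    · exact fun x hx => K_mul_mem hx
    · exact fun x hx => C_mul_mem hx
  | mul a b ha hb =>
    intro x hx
    rw [map_mul]
    have := ha _ (hb x hx)
    convert this using 1
    exact @mul_assoc UOsp12 _ _ _ _
  | add a b ha hb =>
    intro x hx
    rw [map_add]
    have := add_mem (ha x hx) (hb x hx)
    convert this using 1
    exact @add_mul UOsp12 _ _ _ _ _ _

lemma S_top : ⊤ ≤ S := by
  intro a _
  have h1 : (1 : UOsp12) ∈ S := by
    have : (1 : UOsp12) = mfam (0, 0, 0) := by simp [mfam]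
    rw [this]; exact mfam_mem 0 0 0
  have := mul_mem_S a 1 h1
  rwa [mul_one] at this

noncomputable def β : Module.Basis (ℕ × ℕ × ℕ) ℂ UOsp12 := Module.Basis.mk mfam_li S_top

end Osp

/-- `U(osp(1,2))` is isomorphic as a ℂ-algebra to the iterated Ore extension
`ℂ[b⁺][k; δ][b⁻; τ, d]` where `δ = b⁺∂_{b⁺}`, `τ(b⁺) = -b⁺`, `τ(k) = k + 1`,
`d(b⁺) = 2k`, `d(k) = 0`.  The iterated Ore extension is characterized, up to
ℂ-algebra isomorphism, as the ℂ-algebra on generators `B, K, C` with the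
straightening relations `KB = BK + δ(B)`, `CB = τ(B)C + d(B)`, `CK = τ(K)C + d(K)`
in which the ordered monomials `Bⁱ Kʲ Cˡ` form a ℂ-basis. -/
theorem stmt_16 :
    ∃ (O : Type) (_ : Ring O) (_ : Algebra ℂ O) (B K C : O),
      K * B = B * K + B ∧
      C * B = -B * C + 2 * K ∧
      C * K = (K + 1) * C ∧
      (∃ β : Module.Basis (ℕ × ℕ × ℕ) ℂ O, ∀ i j l, β (i, j, l) = B ^ i * K ^ j * C ^ l) ∧
      ∃ e : UOsp12 ≃ₐ[ℂ] O,
        e (RingQuot.mkAlgHom ℂ OspRel (FreeAlgebra.ι ℂ 0)) = B ∧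
        e (RingQuot.mkAlgHom ℂ OspRel (FreeAlgebra.ι ℂ 1)) = K ∧
        e (RingQuot.mkAlgHom ℂ OspRel (FreeAlgebra.ι ℂ 2)) = C := by
  refine ⟨UOsp12, inferInstance, inferInstance, Osp.Bq, Osp.Kq, Osp.Cq,
    Osp.relKB, Osp.relCB, Osp.relCK, ⟨Osp.β, fun i j l => ?_⟩,
    AlgEquiv.refl, rfl, rfl, rfl⟩
  rw [Osp.β]
  erw [Module.Basis.mk_apply]
  rfl
end
end

section
/- For any Lie subsuperalgebra g of osp(1,2n) containing both odd generators bᵢ⁺ and bᵢ⁻ for some i, the element zᵢ := 2bᵢ⁺bᵢ⁻ - 2kᵢ + 1 of U(g) (where kᵢ = (1/2)(bᵢ⁻bᵢ⁺ + bᵢ⁺bᵢ⁻)) satisfies zᵢbᵢ⁺ = -bᵢ⁺zᵢ; consequently -1 ∈ G(Frac U(g)) and Frac U(g) is not isomorphic to a classical Weyl skew field D_{r,t}⁰. -/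
open scoped commutatorElement

/-- For a Lie subsuperalgebra `g` of `osp(1,2n)` containing `bᵢ⁺` and `bᵢ⁻`
(so `Frac U(g)` contains elements `b⁺, b⁻, k` with `[k, b⁺] = b⁺` and
`b⁻b⁺ + b⁺b⁻ = 2k`, with `b⁺` and `z := 2b⁺b⁻ - 2k + 1` nonzero), the element
`z` satisfies `zb⁺ = -b⁺z`; consequently `-1 ∈ G(Frac U(g))` and `Frac U(g)` is
not isomorphic to a classical Weyl skew field, i.e. to any skew field `L` over
ℂ with `G(L) = (L*)′ ∩ ℂ* = {1}`. -/
theorem stmt_19 (D : Type*) [DivisionRing D] [Algebra ℂ D] (bp bm k : D)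
    (h1 : k * bp - bp * k = bp)
    (h2 : bm * bp + bp * bm = 2 * k)
    (hbp : bp ≠ 0)
    (hz : 2 * (bp * bm) - 2 * k + 1 ≠ 0) :
    (2 * (bp * bm) - 2 * k + 1) * bp = -(bp * (2 * (bp * bm) - 2 * k + 1)) ∧
    (∃ g ∈ commutator Dˣ, (g : D) = algebraMap ℂ D (-1)) ∧
    ∀ (L : Type*) [DivisionRing L] [Algebra ℂ L],
      (∀ g ∈ commutator Lˣ, (∃ c : ℂ, (g : L) = algebraMap ℂ L c) → g = 1) →
      IsEmpty (D ≃ₐ[ℂ] L) := by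
  set z := 2 * (bp * bm) - 2 * k + 1 with hzdef
  have hkb : k * bp = bp + bp * k := by
    have := h1; linear_combination (norm := noncomm_ring) this
  have hmb : bm * bp = 2 * k - bp * bm := by
    have := h2; linear_combination (norm := noncomm_ring) this
  have key : z * bp = -(bp * z) := by
    calc z * bp = 2 * (bp * (bm * bp)) - 2 * (k * bp) + bp := by
          rw [hzdef]; noncomm_ring
      _ = 2 * (bp * (2 * k - bp * bm)) - 2 * (bp + bp * k) + bp := by
          rw [hmb, hkb]
      _ = -(bp * z) := by rw [hzdef]; noncomm_ring
  have hcomm : z * bp * z⁻¹ * bp⁻¹ = -1 := by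
    rw [key]
    rw [neg_mul, neg_mul, mul_assoc bp, mul_inv_cancel₀ hz, mul_one, mul_inv_cancel₀ hbp]
  refine ⟨key, ?_, ?_⟩
  · refine ⟨⁅Units.mk0 z hz, Units.mk0 bp hbp⁆,
      Subgroup.commutator_mem_commutator (Subgroup.mem_top _) (Subgroup.mem_top _), ?_⟩
    simp only [commutatorElement_def, Units.val_mul, Units.val_inv_eq_inv_val,
      Units.val_mk0, map_neg, map_one]
    rw [hcomm]
  · intro L _ _ hL
    constructor
    intro φ
    have hz' : φ z ≠ 0 := fun h => hz (by simpa using φ.injective (h.trans (map_zero φ).symm))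
    have hbp' : φ bp ≠ 0 := fun h => hbp (by simpa using φ.injective (h.trans (map_zero φ).symm))
    have hmem : ⁅Units.mk0 (φ z) hz', Units.mk0 (φ bp) hbp'⁆ ∈ commutator Lˣ :=
      Subgroup.commutator_mem_commutator (Subgroup.mem_top _) (Subgroup.mem_top _)
    have hval : ((⁅Units.mk0 (φ z) hz', Units.mk0 (φ bp) hbp'⁆ : Lˣ) : L)
        = algebraMap ℂ L (-1) := by
      simp only [commutatorElement_def, Units.val_mul, Units.val_inv_eq_inv_val,
        Units.val_mk0, map_neg, map_one]
      rw [← map_inv₀ φ, ← map_inv₀ φ, ← map_mul, ← map_mul, ← map_mul, hcomm]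
      simp
    have := hL _ hmem ⟨-1, hval⟩
    have h1L : (algebraMap ℂ L (-1)) = 1 := by rw [← hval, this, Units.val_one]
    have : ((-1 : ℂ)) = 1 := (algebraMap ℂ L).injective (by simpa using h1L)
    norm_num at this
end
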